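/- Let f ∈ ℝ² \ ℤ², let R = {r^1, …, r^k} ⊆ ℝ², and let B_1 ∈ ℝ^{n_1×2} and B_2 ∈ ℝ^{n_2×2} be matrices such that M(B_1) and M(B_2) are lattice-free and all ray intersections are integral, i.e., P(B_1, R) ⊆ ℤ² and P(B_2, R) ⊆ ℤ². Then γ(B_1) = γ(B_2). -/

import Mathlib

open Matrix Pointwise

noncomputable section

/-- A point of `ℝ^m` is an integer point if all its coordinates are integers. -/
def IsIntPoint {m : ℕ} (x : Fin m → ℝ) : Prop := ∀ i, ∃ z : ℤ, x i = (z : ℝ)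

/-- A set is lattice-free if its interior contains no integer point. -/
def IsLatticeFree {m : ℕ} (S : Set (Fin m → ℝ)) : Prop :=
  ∀ x ∈ interior S, ¬ IsIntPoint x

/-- `M(B) = {x ∈ ℝ^m | bⁱ · (x - f) ≤ 1 for all rows bⁱ of B}`. -/
def Mset {n m : ℕ} (f : Fin m → ℝ) (B : Matrix (Fin n) (Fin m) ℝ) :
    Set (Fin m → ℝ) :=
  {x | ∀ i, B i ⬝ᵥ (x - f) ≤ 1}

/-- `ψ_B(r) = max_i bⁱ · r` (the Minkowski functional of `M(B)`). -/
def psi {n m : ℕ} (B : Matrix (Fin n) (Fin m) ℝ) (r : Fin m → ℝ) : ℝ :=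
  ⨆ i, B i ⬝ᵥ r

/-- `γ(B) = (ψ_B(r^1), …, ψ_B(r^k))`. -/
def gammaVec {n k : ℕ} (r : Fin k → Fin 2 → ℝ) (B : Matrix (Fin n) (Fin 2) ℝ) :
    Fin k → ℝ :=
  fun j => psi B (r j)

/-- The nonnegative orthant `ℝ^k_+`. -/
def orthant (k : ℕ) : Set (Fin k → ℝ) := {x | ∀ i, 0 ≤ x i}

/-- `Δ = {γ(B) | B ∈ ℝ^{3×2}, M(B) lattice-free}`. -/
def Delta {k : ℕ} (f : Fin 2 → ℝ) (r : Fin k → Fin 2 → ℝ) : Set (Fin k → ℝ) :=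
  {g | ∃ B : Matrix (Fin 3) (Fin 2) ℝ, IsLatticeFree (Mset f B) ∧ g = gammaVec r B}

/-- `Δ' = cl(conv Δ) + ℝ^k_+` (Minkowski sum). -/
def Delta' {k : ℕ} (f : Fin 2 → ℝ) (r : Fin k → Fin 2 → ℝ) : Set (Fin k → ℝ) :=
  closure (convexHull ℝ (Delta f r)) + orthant k

/-- The triangle closure `T = {s ∈ ℝ^k_+ | γ · s ≥ 1 for all γ ∈ Δ}`. -/
def Tset {k : ℕ} (f : Fin 2 → ℝ) (r : Fin k → Fin 2 → ℝ) : Set (Fin k → ℝ) :=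
  {s | s ∈ orthant k ∧ ∀ g ∈ Delta f r, 1 ≤ g ⬝ᵥ s}

/-- `x` is an extreme point of `K`: `x ∈ K` and `x` is not the midpoint of two
points of `K` both different from `x`. -/
def IsExtremePt {E : Type*} [AddCommGroup E] [Module ℝ E] (K : Set E) (x : E) : Prop :=
  x ∈ K ∧ ¬ ∃ y₁ ∈ K, ∃ y₂ ∈ K, y₁ ≠ x ∧ y₂ ≠ x ∧ x = (2⁻¹ : ℝ) • (y₁ + y₂)

/-- A vector is rational if all its coordinates are rational. -/
def IsRatVec {m : ℕ} (x : Fin m → ℝ) : Prop := ∀ i, ∃ q : ℚ, x i = (q : ℝ)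

/-- A maximal lattice-free convex set. -/
def IsMaxLatticeFree {m : ℕ} (S : Set (Fin m → ℝ)) : Prop :=
  Convex ℝ S ∧ IsLatticeFree S ∧
    ∀ S' : Set (Fin m → ℝ), Convex ℝ S' → IsLatticeFree S' → S ⊆ S' → S' = S


/-- Points strictly satisfying all constraints lie in the interior of `Mset`. -/
lemma strict_mem_interior_Mset {n m : ℕ} (f : Fin m → ℝ) (B : Matrix (Fin n) (Fin m) ℝ)
    (x : Fin m → ℝ) (hx : ∀ i, B i ⬝ᵥ (x - f) < 1) : x ∈ interior (Mset f B) := by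
  have hopen : IsOpen {y : Fin m → ℝ | ∀ i, B i ⬝ᵥ (y - f) < 1} := by
    have heq : {y : Fin m → ℝ | ∀ i, B i ⬝ᵥ (y - f) < 1}
        = ⋂ i, {y : Fin m → ℝ | B i ⬝ᵥ (y - f) < 1} := by
      ext y; simp
    rw [heq]
    refine isOpen_iInter_of_finite fun i => isOpen_lt ?_ continuous_const
    simp only [dotProduct]
    fun_prop
  have hsub : {y : Fin m → ℝ | ∀ i, B i ⬝ᵥ (y - f) < 1} ⊆ Mset f B := by
    intro y hy i
    exact le_of_lt (hy i)
  exact interior_maximal hsub hopen hx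

lemma dot_le_psi {n m : ℕ} (B : Matrix (Fin n) (Fin m) ℝ) (r : Fin m → ℝ) (i : Fin n) :
    B i ⬝ᵥ r ≤ psi B r := by
  unfold psi
  exact le_ciSup (f := fun i => B i ⬝ᵥ r) (Set.Finite.bddAbove (Set.finite_range _)) i

/-- Lattice-freeness of `M(B)` forces `ψ_B ≥ 0`. -/
lemma psi_nonneg_of_latticeFree {n : ℕ} (hn : 1 ≤ n) (f : Fin 2 → ℝ)
    (B : Matrix (Fin n) (Fin 2) ℝ) (h : IsLatticeFree (Mset f B)) (r : Fin 2 → ℝ) :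
    0 ≤ psi B r := by
  by_contra hlt
  push_neg at hlt
  set δ : ℝ := -(psi B r) with hδdef
  have hδ : 0 < δ := by simp [hδdef]; linarith
  set C : ℝ := ∑ i, (|B i 0| + |B i 1|) with hCdef
  have hC0 : 0 ≤ C := Finset.sum_nonneg fun i _ => by positivity
  have hCi : ∀ i : Fin n, |B i 0| + |B i 1| ≤ C := fun i =>
    Finset.single_le_sum (f := fun i => |B i 0| + |B i 1|)
      (fun i _ => by positivity) (Finset.mem_univ i)
  set t : ℝ := (C / 2 + 1) / δ with htdef
  have ht0 : 0 ≤ t := by positivity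
  have htδ : t * δ = C / 2 + 1 := div_mul_cancel₀ _ (ne_of_gt hδ)
  -- integer point far along direction r
  set z : Fin 2 → ℝ := fun j => ((round (f j + t * r j) : ℤ) : ℝ) with hzdef
  have hzint : IsIntPoint z := fun j => ⟨round (f j + t * r j), rfl⟩
  have hzin : ∀ i, B i ⬝ᵥ (z - f) < 1 := by
    intro i
    have hir : B i ⬝ᵥ r ≤ -δ := by
      have := dot_le_psi B r i; linarith
    have he : ∀ j : Fin 2, |z j - f j - t * r j| ≤ 1 / 2 := by
      intro j
      have := abs_sub_round (f j + t * r j)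
      rw [abs_sub_comm] at this
      convert this using 2
      all_goals first | rfl | (simp [hzdef]; ring)
    have he0 := abs_le.1 (he 0)
    have he1 := abs_le.1 (he 1)
    have hd : B i ⬝ᵥ (z - f) = t * (B i ⬝ᵥ r)
        + B i 0 * (z 0 - f 0 - t * r 0) + B i 1 * (z 1 - f 1 - t * r 1) := by
      simp [dotProduct, Fin.sum_univ_two]; ring
    have hb0 : B i 0 * (z 0 - f 0 - t * r 0) ≤ |B i 0| / 2 := by
      calc B i 0 * (z 0 - f 0 - t * r 0) ≤ |B i 0 * (z 0 - f 0 - t * r 0)| := le_abs_self _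
        _ = |B i 0| * |z 0 - f 0 - t * r 0| := abs_mul _ _
        _ ≤ |B i 0| * (1 / 2) := mul_le_mul_of_nonneg_left (he 0) (abs_nonneg _)
        _ = |B i 0| / 2 := by ring
    have hb1 : B i 1 * (z 1 - f 1 - t * r 1) ≤ |B i 1| / 2 := by
      calc B i 1 * (z 1 - f 1 - t * r 1) ≤ |B i 1 * (z 1 - f 1 - t * r 1)| := le_abs_self _
        _ = |B i 1| * |z 1 - f 1 - t * r 1| := abs_mul _ _
        _ ≤ |B i 1| * (1 / 2) := mul_le_mul_of_nonneg_left (he 1) (abs_nonneg _)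
        _ = |B i 1| / 2 := by ring
    have htir : t * (B i ⬝ᵥ r) ≤ t * (-δ) := mul_le_mul_of_nonneg_left hir ht0
    have := hCi i
    rw [hd]
    nlinarith [htδ]
  exact h z (strict_mem_interior_Mset f B z hzin) hzint

/-- One-sided comparison of `ψ` values. -/
lemma psi_le_psi {n₁ n₂ : ℕ} (hn₁ : 1 ≤ n₁) (hn₂ : 1 ≤ n₂) (f : Fin 2 → ℝ)
    (ρ : Fin 2 → ℝ) (B₁ : Matrix (Fin n₁) (Fin 2) ℝ) (B₂ : Matrix (Fin n₂) (Fin 2) ℝ)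
    (h₁ : IsLatticeFree (Mset f B₁)) (h₂ : IsLatticeFree (Mset f B₂))
    (hp₁ : 0 < psi B₁ ρ → IsIntPoint (f + (psi B₁ ρ)⁻¹ • ρ)) :
    psi B₁ ρ ≤ psi B₂ ρ := by
  by_contra hlt
  push_neg at hlt
  have hψ₂ : 0 ≤ psi B₂ ρ := psi_nonneg_of_latticeFree hn₂ f B₂ h₂ ρ
  have hψ₁ : 0 < psi B₁ ρ := lt_of_le_of_lt hψ₂ hlt
  set p : Fin 2 → ℝ := f + (psi B₁ ρ)⁻¹ • ρ with hpdef
  have hpint : IsIntPoint p := hp₁ hψ₁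
  have hpin : ∀ i, B₂ i ⬝ᵥ (p - f) < 1 := by
    intro i
    have hps : p - f = (psi B₁ ρ)⁻¹ • ρ := by simp [hpdef]
    rw [hps, dotProduct_smul]
    have h1 : B₂ i ⬝ᵥ ρ ≤ psi B₂ ρ := dot_le_psi B₂ ρ i
    have h2 : (psi B₁ ρ)⁻¹ * (B₂ i ⬝ᵥ ρ) ≤ (psi B₁ ρ)⁻¹ * psi B₂ ρ :=
      mul_le_mul_of_nonneg_left h1 (inv_nonneg.2 hψ₁.le)
    have h3 : (psi B₁ ρ)⁻¹ * psi B₂ ρ < 1 := by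
      rw [inv_mul_eq_div]
      exact (div_lt_one hψ₁).2 hlt
    calc ((psi B₁ ρ)⁻¹ • (B₂ i ⬝ᵥ ρ)) = (psi B₁ ρ)⁻¹ * (B₂ i ⬝ᵥ ρ) := rfl
      _ < 1 := lt_of_le_of_lt h2 h3
  exact h₂ p (strict_mem_interior_Mset f B₂ p hpin) hpint

/-- if all ray intersections of two lattice-free sets `M(B₁)`, `M(B₂)`
are integral, then `γ(B₁) = γ(B₂)`. -/
theorem stmt9 (k n₁ n₂ : ℕ) (hn₁ : 1 ≤ n₁) (hn₂ : 1 ≤ n₂)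
    (f : Fin 2 → ℝ) (hf : ¬ IsIntPoint f) (r : Fin k → Fin 2 → ℝ)
    (B₁ : Matrix (Fin n₁) (Fin 2) ℝ) (B₂ : Matrix (Fin n₂) (Fin 2) ℝ)
    (h₁ : IsLatticeFree (Mset f B₁)) (h₂ : IsLatticeFree (Mset f B₂))
    (hp₁ : ∀ j, 0 < psi B₁ (r j) → IsIntPoint (f + (psi B₁ (r j))⁻¹ • r j))
    (hp₂ : ∀ j, 0 < psi B₂ (r j) → IsIntPoint (f + (psi B₂ (r j))⁻¹ • r j)) :
    gammaVec r B₁ = gammaVec r B₂ := by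
  funext j
  exact le_antisymm
    (psi_le_psi hn₁ hn₂ f (r j) B₁ B₂ h₁ h₂ (hp₁ j))
    (psi_le_psi hn₂ hn₁ f (r j) B₂ B₁ h₂ h₁ (hp₂ j))
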